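/- In the numerical semigroup ring setting, let m > n > 0 be integers with ℓ+1 ≤ m ≤ e−1. Then b_m ≤ bm − n holds if and only if a_1^m ∈ q n^n. -/

import Mathlib

open Polynomial IsLocalRing

set_option synthInstance.maxHeartbeats 1000000
set_option maxHeartbeats 1000000

noncomputable section

/-- The length `ℓ_A(M)` of an `A`-module `M`, defined as the Krull dimension of its
lattice of submodules. -/
def moduleLength (A : Type*) [CommRing A] (M : Type*) [AddCommGroup M] [Module A M] : ℕ∞ :=
  WithBot.unbotD 0 (Order.krullDim (Submodule A M))

/-- `ℓ_A(M/N)` for ideals `N ⊆ M` of `A`. -/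
def qlen {A : Type*} [CommRing A] (M N : Ideal A) : ℕ∞ :=
  moduleLength A (↥M ⧸ (Submodule.comap M.subtype N))

/-- `ℓ_A(A/J)`. -/
def cyclen {A : Type*} [CommRing A] (J : Ideal A) : ℕ∞ :=
  moduleLength A (A ⧸ J)

/-- The depth of `M` with respect to the ideal `J`: the supremum of the lengths of
`M`-regular sequences consisting of elements of `J`. -/
def seqDepth {A : Type*} [CommRing A] (J : Ideal A) (M : Type*) [AddCommGroup M]
    [Module A M] : ℕ∞ :=
  sSup {n : ℕ∞ | ∃ rs : List A, (∀ r ∈ rs, r ∈ J) ∧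
    RingTheory.Sequence.IsRegular M rs ∧ (rs.length : ℕ∞) = n}

/-- The associated graded ring `G(I) = ⊕_{n ≥ 0} Iⁿ/Iⁿ⁺¹`, realized as `R(I)/I·R(I)`
where `R(I)` is the Rees algebra of `I`. -/
abbrev agr {A : Type*} [CommRing A] (I : Ideal A) : Type _ :=
  (reesAlgebra I) ⧸ (Ideal.map (algebraMap A (reesAlgebra I)) I)

/-- The irrelevant ideal `R(I)_+` of the Rees algebra, generated by the degree-one
elements `a·t`, `a ∈ I`. -/
def reesPlus {A : Type*} [CommRing A] (I : Ideal A) : Ideal (reesAlgebra I) :=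
  Ideal.span {x | ∃ a ∈ I, (x : A[X]) = Polynomial.monomial 1 a}

/-- The unique graded maximal ideal `m/I ⊕ ⊕_{n ≥ 1} Iⁿ/Iⁿ⁺¹` of the associated graded
ring `G(I)`. -/
def gMax {A : Type*} [CommRing A] (m I : Ideal A) : Ideal (agr I) :=
  Ideal.map (Ideal.Quotient.mk _) (Ideal.map (algebraMap A (reesAlgebra I)) m ⊔ reesPlus I)

/-- The index of nilpotency `n_I = min {n ≥ 0 | I^{n+1} ⊆ Q}`. -/
def nidx {A : Type*} [CommRing A] (I Q : Ideal A) : ℕ := sInf {n | I ^ (n + 1) ≤ Q}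

/-- The reduction number `r_I = min {n ≥ 0 | I^{n+1} = Q·Iⁿ}`. -/
def rnum {A : Type*} [CommRing A] (I Q : Ideal A) : ℕ := sInf {n | I ^ (n + 1) = Q * I ^ n}

/-- `I` is stretched with respect to `Q`: `Q ∩ I² = Q·I` and `ℓ_A((I²+Q)/(I³+Q)) = 1`. -/
def IsStretched {A : Type*} [CommRing A] (I Q : Ideal A) : Prop :=
  Q ⊓ I ^ 2 = Q * I ∧ qlen (I ^ 2 ⊔ Q) (I ^ 3 ⊔ Q) = 1

/-- The associated graded ring `G(I)` is Cohen-Macaulay: its depth with respect to the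
graded maximal ideal equals its Krull dimension. -/
def agrCM {A : Type*} [CommRing A] (m I : Ideal A) : Prop :=
  (seqDepth (A := agr I) (gMax m I) (agr I) : WithBot ℕ∞) = ringKrullDim (agr I)

namespace SGAux

variable {k : Type*} [Field k]

/-- `d` is representable as `α·e + β·(be+1) + Σ γ_j (bf j·e+j)` with `A ≤ α` and
total number of summands at least `t`. -/
def erep (b e ℓ : ℕ) (bf : ℕ → ℕ) (t A d : ℕ) : Prop :=
  ∃ α β : ℕ, ∃ γ : ℕ → ℕ, A ≤ α ∧
    t ≤ α + β + ∑ j ∈ Finset.Icc (ℓ+1) (e-1), γ j ∧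
    d = α * e + β * (b*e+1) + ∑ j ∈ Finset.Icc (ℓ+1) (e-1), γ j * (bf j * e + j)

lemma erep_add {b e ℓ t A d t' A' d' : ℕ} {bf : ℕ → ℕ} (h : erep b e ℓ bf t A d)
    (h' : erep b e ℓ bf t' A' d') : erep b e ℓ bf (t+t') (A+A') (d+d') := by
  obtain ⟨α, β, γ, hA, ht, hd⟩ := h
  obtain ⟨α', β', γ', hA', ht', hd'⟩ := h'
  refine ⟨α+α', β+β', γ+γ', by omega, ?_, ?_⟩
  · simp only [Pi.add_apply, Finset.sum_add_distrib]; omega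
  · simp only [Pi.add_apply, add_mul, Finset.sum_add_distrib]
    subst hd hd'; ring

lemma erep_mono {b e ℓ t A d t' A' : ℕ} {bf : ℕ → ℕ} (h : erep b e ℓ bf t A d)
    (ht : t' ≤ t) (hA : A' ≤ A) : erep b e ℓ bf t' A' d := by
  obtain ⟨α, β, γ, h1, h2, h3⟩ := h
  exact ⟨α, β, γ, by omega, by omega, h3⟩

lemma erep_e (b e ℓ : ℕ) (bf : ℕ → ℕ) : erep b e ℓ bf 1 1 e := by
  refine ⟨1, 0, fun _ => 0, le_rfl, by simp, by simp⟩

lemma erep_a1 (b e ℓ : ℕ) (bf : ℕ → ℕ) : erep b e ℓ bf 1 0 (b*e+1) := by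
  refine ⟨0, 1, fun _ => 0, le_rfl, by simp, by simp⟩

lemma erep_gen (b e ℓ : ℕ) (bf : ℕ → ℕ) {j : ℕ} (hj : j ∈ Finset.Icc (ℓ+1) (e-1)) :
    erep b e ℓ bf 1 0 (bf j * e + j) := by
  refine ⟨0, 0, fun i => if i = j then 1 else 0, le_rfl, ?_, ?_⟩
  · simp [Finset.sum_ite_eq', hj]
  · simp [ite_mul, Finset.sum_ite_eq', hj]

/-- The `k`-span of the monomials with exponents representable as in `erep`. -/
def vspan (k : Type*) [Field k] (b e ℓ : ℕ) (bf : ℕ → ℕ) (t A : ℕ) : Submodule k (Polynomial k) :=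
  Submodule.span k ((fun s => (X : Polynomial k)^s) '' {d | erep b e ℓ bf t A d})

lemma monomial_mem_vspan {b e ℓ t A d : ℕ} {bf : ℕ → ℕ} (h : erep b e ℓ bf t A d) :
    (X : Polynomial k)^d ∈ vspan k b e ℓ bf t A :=
  Submodule.subset_span ⟨d, h, rfl⟩

lemma vspan_mul_vspan {b e ℓ t A t' A' : ℕ} {bf : ℕ → ℕ} {x y : Polynomial k}
    (hx : x ∈ vspan k b e ℓ bf t A) (hy : y ∈ vspan k b e ℓ bf t' A') :
    x * y ∈ vspan k b e ℓ bf (t+t') (A+A') := by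
  have hmul : vspan k b e ℓ bf t A * vspan k b e ℓ bf t' A' ≤ vspan k b e ℓ bf (t+t') (A+A') := by
    rw [vspan, vspan, Submodule.span_mul_span]
    apply Submodule.span_mono
    rintro _ ⟨u, ⟨d, hd, rfl⟩, v, ⟨d', hd', rfl⟩, rfl⟩
    exact ⟨d + d', erep_add hd hd', by simp [pow_add]⟩
  exact hmul (Submodule.mul_mem_mul hx hy)

lemma erep_of_monomial_mem_vspan {b e ℓ t A d : ℕ} {bf : ℕ → ℕ}
    (h : (X : Polynomial k)^d ∈ vspan k b e ℓ bf t A) : erep b e ℓ bf t A d := by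
  by_contra hne
  have hle : vspan k b e ℓ bf t A ≤ LinearMap.ker (lcoeff k d) := by
    rw [vspan, Submodule.span_le]
    rintro _ ⟨d', hd', rfl⟩
    simp only [SetLike.mem_coe, LinearMap.mem_ker, lcoeff_apply, coeff_X_pow]
    have : d' ≠ d := fun hdd => hne (hdd ▸ hd')
    simp [this, Ne.symm this]
  have := hle h
  simp only [LinearMap.mem_ker, lcoeff_apply, coeff_X_pow, if_pos rfl] at this
  exact one_ne_zero this

lemma chain {b e ℓ : ℕ} {bf : ℕ → ℕ}
    (hstep : ∀ j, ℓ + 1 ≤ j → j ≤ e - 2 → bf (j + 1) ≤ bf j + (b + 1) / 2) :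
    ∀ dd i, ℓ + 1 ≤ i → i + dd ≤ e - 1 → bf (i + dd) ≤ bf i + dd * ((b+1)/2) := by
  intro dd
  induction dd with
  | zero => intro i h1 h2; simp
  | succ d ih =>
    intro i h1 h2
    have h3 : i + d ≤ e - 2 := by omega
    have h5 := hstep (i+d) (by omega) h3
    have h4 := ih i h1 (by omega)
    calc bf (i + (d+1)) = bf ((i+d)+1) := by rw [← add_assoc]
    _ ≤ bf (i+d) + (b+1)/2 := h5
    _ ≤ bf i + d*((b+1)/2) + (b+1)/2 := by omega
    _ = bf i + (d+1)*((b+1)/2) := by ring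

lemma key_arith {b e ℓ m n : ℕ} {bf : ℕ → ℕ} (hb : 2 ≤ b)
    (hlow : ∀ j, ℓ + 1 ≤ j → j ≤ e - 1 → (b + 1) / 2 * j + 1 ≤ bf j)
    (hfirst : bf (ℓ + 1) ≤ b * ℓ + b - 1)
    (hstep : ∀ j, ℓ + 1 ≤ j → j ≤ e - 2 → bf (j + 1) ≤ bf j + (b + 1) / 2)
    (hn : 0 < n) (hnm : n < m) (hm1 : ℓ + 1 ≤ m) (hm2 : m ≤ e - 1)
    (h : erep b e ℓ bf (n+1) 1 ((b*e+1)*m)) : bf m + n ≤ b * m := by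
  obtain ⟨α, β, γ, hα, hcnt, heq⟩ := h
  set c := (b+1)/2 with hc
  have hcb : c + 1 ≤ b := by omega
  have hc2 : b ≤ 2*c := by omega
  have hem : m + 1 ≤ e := by omega
  set I := Finset.Icc (ℓ+1) (e-1) with hI
  set S := ∑ j ∈ I, γ j with hS
  set Sj := ∑ j ∈ I, γ j * j with hSj
  set SB := ∑ j ∈ I, γ j * bf j with hSB
  have hsplit : ∑ j ∈ I, γ j * (bf j * e + j) = SB * e + Sj := by
    rw [hSB, hSj, Finset.sum_mul, ← Finset.sum_add_distrib]
    exact Finset.sum_congr rfl fun j _ => by ring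
  rw [hsplit] at heq
  have hKR : e*(α + β*b + SB) + (β + Sj) = e*(b*m) + m := by
    calc e*(α + β*b + SB) + (β + Sj) = α*e + β*(b*e+1) + (SB*e + Sj) := by ring
    _ = (b*e+1)*m := heq.symm
    _ = e*(b*m) + m := by ring
  have hK : α + β*b + SB ≤ b*m := by
    by_contra h'
    push_neg at h'
    have h'' : e*(b*m) + e ≤ e*(α+β*b+SB) := by
      calc e*(b*m)+e = e*(b*m+1) := by ring
      _ ≤ e*(α+β*b+SB) := Nat.mul_le_mul_left e h'
    linarith
  obtain ⟨t, ht⟩ : ∃ t, α + β*b + SB + t = b*m := ⟨b*m - (α+β*b+SB), by omega⟩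
  have hR : β + Sj = m + e*t := by
    have h2 : e*(b*m) = e*(α+β*b+SB) + e*t := by rw [← ht]; ring
    linarith
  have hSBlow : c*Sj + S ≤ SB := by
    rw [hSB, hSj, hS, Finset.mul_sum, ← Finset.sum_add_distrib]
    apply Finset.sum_le_sum
    intro j hj
    have hjm := Finset.mem_Icc.mp hj
    have hl := hlow j hjm.1 hjm.2
    calc c*(γ j * j) + γ j = γ j * (c*j+1) := by ring
    _ ≤ γ j * bf j := Nat.mul_le_mul_left _ hl
  rcases Nat.eq_zero_or_pos t with ht0 | ht1
  · -- t = 0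
    subst ht0
    simp only [Nat.mul_zero, Nat.add_zero] at hR ht
    rcases Nat.eq_zero_or_pos S with hS0 | hSpos
    · -- S = 0: contradiction with α ≥ 1
      exfalso
      have hsum0 : ∑ j ∈ I, γ j = 0 := by rw [← hS]; exact hS0
      have hγ : ∀ j ∈ I, γ j = 0 := Finset.sum_eq_zero_iff.mp hsum0
      have hSj0 : Sj = 0 := by
        rw [hSj]; exact Finset.sum_eq_zero fun j hj => by rw [hγ j hj]; ring
      have hSB0 : SB = 0 := by
        rw [hSB]; exact Finset.sum_eq_zero fun j hj => by rw [hγ j hj]; ring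
      have hβ : β = m := by omega
      have hbb : β*b = b*m := by rw [hβ]; ring
      linarith
    · obtain ⟨j0, hj0I, hγj0⟩ : ∃ j0 ∈ I, γ j0 ≠ 0 := by
        apply Finset.exists_ne_zero_of_sum_ne_zero
        rw [← hS]; omega
      obtain ⟨hj0l, hj0u⟩ := Finset.mem_Icc.mp hj0I
      obtain ⟨g, hg⟩ : ∃ g, γ j0 = g + 1 := ⟨γ j0 - 1, by omega⟩
      have hSsp : S = γ j0 + ∑ j ∈ I.erase j0, γ j := by
        rw [hS, Finset.add_sum_erase _ _ hj0I]
      have hSjsp : Sj = γ j0 * j0 + ∑ j ∈ I.erase j0, γ j * j := by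
        rw [hSj, Finset.add_sum_erase _ (fun j => γ j * j) hj0I]
      have hSBsp : SB = γ j0 * bf j0 + ∑ j ∈ I.erase j0, γ j * bf j := by
        rw [hSB, Finset.add_sum_erase _ (fun j => γ j * bf j) hj0I]
      set S' := ∑ j ∈ I.erase j0, γ j with hS'
      set Sj' := ∑ j ∈ I.erase j0, γ j * j with hSj'
      set SB' := ∑ j ∈ I.erase j0, γ j * bf j with hSB'
      have hlow' : c*Sj' + S' ≤ SB' := by
        rw [hSB', hSj', hS', Finset.mul_sum, ← Finset.sum_add_distrib]
        apply Finset.sum_le_sum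
        intro j hj
        have hjm := Finset.mem_Icc.mp (Finset.mem_of_mem_erase hj)
        have hl := hlow j hjm.1 hjm.2
        calc c*(γ j * j) + γ j = γ j * (c*j+1) := by ring
        _ ≤ γ j * bf j := Nat.mul_le_mul_left _ hl
      have hbfj0 : c*j0 + 1 ≤ bf j0 := hlow j0 hj0l hj0u
      have hj0Sj : j0 ≤ Sj := by
        have h1 : γ j0 * j0 ≤ Sj := by rw [hSjsp]; omega
        have h2 : j0 ≤ γ j0 * j0 := Nat.le_mul_of_pos_left j0 (by omega)
        omega
      have hj0m : j0 ≤ m := by omega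
      obtain ⟨dd, hdd⟩ : ∃ dd, m = j0 + dd := ⟨m - j0, by omega⟩
      have hch := chain hstep dd j0 hj0l (by omega)
      rw [← hc, ← hdd] at hch
      have X1 : γ j0 * j0 = g*j0 + j0 := by rw [hg]; ring
      have X2 : γ j0 * bf j0 = g*(bf j0) + bf j0 := by rw [hg]; ring
      have X4 : dd = β + g*j0 + Sj' := by linarith
      have X5 : dd*c = β*c + (g*j0)*c + Sj'*c := by rw [X4]; ring
      have X7 : g*(c*j0) + g ≤ g*(bf j0) := by
        calc g*(c*j0) + g = g*(c*j0+1) := by ring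
        _ ≤ g*(bf j0) := Nat.mul_le_mul_left g hbfj0
      have A8 : β*c + β ≤ β*b := by
        calc β*c + β = β*(c+1) := by ring
        _ ≤ β*b := Nat.mul_le_mul_left β hcb
      linarith
  · -- t ≥ 1
    obtain ⟨d0, hd0⟩ : ∃ d0, m = (ℓ+1) + d0 := ⟨m - (ℓ+1), by omega⟩
    have hch := chain hstep d0 (ℓ+1) le_rfl (by omega)
    rw [← hc, ← hd0] at hch
    have hbfm1 : bf m + 1 ≤ b*ℓ + b + d0*c := by omega
    have P1 : b*ℓ ≤ c*ℓ + c*ℓ := by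
      calc b*ℓ ≤ (2*c)*ℓ := Nat.mul_le_mul_right ℓ hc2
      _ = c*ℓ + c*ℓ := by ring
    have P2 : c*ℓ + 2*c ≤ c*e := by
      calc c*ℓ + 2*c = c*(ℓ+2) := by ring
      _ ≤ c*e := Nat.mul_le_mul_left c (by omega)
    have P4 : c*e ≤ c*(e*t) := Nat.mul_le_mul_left c (Nat.le_mul_of_pos_right e ht1)
    have A8 : β*c + β ≤ β*b := by
      calc β*c + β = β*(c+1) := by ring
      _ ≤ β*b := Nat.mul_le_mul_left β hcb
    have E2 : c*(β+Sj) = c*m + c*(e*t) := by rw [hR]; ring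
    have E1 : c*(β+Sj) = β*c + c*Sj := by ring
    have E4 : c*m = c*ℓ + c + c*d0 := by rw [hd0]; ring
    have E5 : c*d0 = d0*c := by ring
    linarith


end SGAux

theorem semigroup_ring_power_membership_criterion {k : Type*} [Field k] (b e ℓ : ℕ) (bf : ℕ → ℕ)
    (hb : 2 ≤ b) (hℓ2 : 2 ≤ ℓ) (hℓe : ℓ ≤ e - 1)
    (hb1 : bf 1 = b)
    (hlow : ∀ n, ℓ + 1 ≤ n → n ≤ e - 1 → (b + 1) / 2 * n + 1 ≤ bf n)
    (hfirst : bf (ℓ + 1) ≤ b * ℓ + b - 1)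
    (hstep : ∀ n, ℓ + 1 ≤ n → n ≤ e - 2 → bf (n + 1) ≤ bf n + (b + 1) / 2)
    (C : Subalgebra k (Polynomial k))
    (hC : C = Algebra.adjoin k
      ({Polynomial.X ^ e, Polynomial.X ^ (b * e + 1)} ∪
        (fun n => (Polynomial.X : Polynomial k) ^ (bf n * e + n)) '' Set.Icc (ℓ + 1) (e - 1)))
    (a a1 : C) (av : ℕ → C)
    (ha : (a : Polynomial k) = Polynomial.X ^ e)
    (ha1 : (a1 : Polynomial k) = Polynomial.X ^ (b * e + 1))
    (hav : ∀ n, ℓ + 1 ≤ n → n ≤ e - 1 →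
      (av n : Polynomial k) = Polynomial.X ^ (bf n * e + n))
    (q 𝔫 : Ideal C)
    (hq : q = Ideal.span {a})
    (h𝔫 : 𝔫 = Ideal.span ({a, a1} ∪ av '' Set.Icc (ℓ + 1) (e - 1)))
    (m n : ℕ) (hn : 0 < n) (hnm : n < m) (hm1 : ℓ + 1 ≤ m) (hm2 : m ≤ e - 1) :
    bf m ≤ b * m - n ↔ a1 ^ m ∈ q * 𝔫 ^ n := by
  classical
  have hem : m + 1 ≤ e := by omega
  constructor
  · -- easy direction
    intro hle
    have hmbm : m ≤ b*m := Nat.le_mul_of_pos_left m (by omega)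
    have hbm : bf m + n ≤ b*m := by omega
    obtain ⟨n', rfl⟩ : ∃ n', n = n'+1 := ⟨n-1, by omega⟩
    set w := b*m - (bf m + (n'+1)) with hw
    have hwe : w + bf m + n' + 1 = b*m := by omega
    have hmem1 : a^(w+1) ∈ q := by
      rw [hq, Ideal.mem_span_singleton']
      exact ⟨a^w, by ring⟩
    have haN : a ∈ 𝔫 := by
      rw [h𝔫]; exact Ideal.subset_span (Or.inl (Or.inl rfl))
    have havN : av m ∈ 𝔫 := by
      rw [h𝔫]; exact Ideal.subset_span (Or.inr ⟨m, ⟨hm1, hm2⟩, rfl⟩)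
    have hmem2 : a^n' * av m ∈ 𝔫^(n'+1) := by
      rw [pow_succ]
      exact Ideal.mul_mem_mul (Ideal.pow_mem_pow haN n') havN
    have hprod : a1^m = a^(w+1) * (a^n' * av m) := by
      apply Subtype.ext
      push_cast
      rw [ha, ha1, hav m hm1 hm2]
      rw [← pow_mul, ← pow_mul, ← pow_mul, ← pow_add, ← pow_add]
      congr 1
      rw [show (b*e+1)*m = e*(b*m)+m from by ring, ← hwe]
      ring
    rw [hprod]
    exact Ideal.mul_mem_mul hmem1 hmem2
  · -- hard direction
    intro hmem
    -- every element of C lies in the monomial span `vspan 0 0`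
    have hC1 : ∀ x : C, (x : Polynomial k) ∈ SGAux.vspan k b e ℓ bf 0 0 := by
      intro x
      have hx : (x : Polynomial k) ∈ Subalgebra.toSubmodule
          (Algebra.adjoin k ({Polynomial.X ^ e, Polynomial.X ^ (b * e + 1)} ∪
            (fun n => (Polynomial.X : Polynomial k) ^ (bf n * e + n)) ''
              Set.Icc (ℓ + 1) (e - 1))) := by
        rw [← hC]; exact x.2
      rw [Algebra.adjoin_eq_span] at hx
      refine Submodule.span_le.mpr ?_ hx
      intro y hy
      have hkey : ∃ d', SGAux.erep b e ℓ bf 0 0 d' ∧ y = (X : Polynomial k)^d' := by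
        refine Submonoid.closure_induction ?_ ?_ ?_ hy
        · rintro z ((rfl | rfl) | ⟨j, hj, rfl⟩)
          · exact ⟨e, SGAux.erep_mono (SGAux.erep_e b e ℓ bf) (by omega) (by omega), rfl⟩
          · exact ⟨b*e+1, SGAux.erep_mono (SGAux.erep_a1 b e ℓ bf) (by omega) (by omega), rfl⟩
          · exact ⟨bf j * e + j,
              SGAux.erep_mono (SGAux.erep_gen b e ℓ bf (Finset.mem_Icc.mpr ⟨hj.1, hj.2⟩))
                (by omega) (by omega), rfl⟩
        · exact ⟨0, ⟨0, 0, fun _ => 0, le_rfl, by simp, by simp⟩, (pow_zero _).symm⟩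
        · rintro z w hz hw ⟨d1, hd1, rfl⟩ ⟨d2, hd2, rfl⟩
          exact ⟨d1 + d2, SGAux.erep_mono (SGAux.erep_add hd1 hd2) (by omega) (by omega),
            (pow_add _ _ _).symm⟩
      obtain ⟨d', hd', rfl⟩ := hkey
      exact SGAux.monomial_mem_vspan hd'
    -- elements of 𝔫 lie in `vspan 1 0`
    have hN : ∀ x : C, x ∈ 𝔫 → (x : Polynomial k) ∈ SGAux.vspan k b e ℓ bf 1 0 := by
      intro x hx
      rw [h𝔫] at hx
      refine Submodule.span_induction ?_ ?_ ?_ ?_ hx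
      · rintro z ((rfl | rfl) | ⟨j, hj, rfl⟩)
        · rw [ha]
          exact SGAux.monomial_mem_vspan
            (SGAux.erep_mono (SGAux.erep_e b e ℓ bf) le_rfl (by omega))
        · rw [ha1]; exact SGAux.monomial_mem_vspan (SGAux.erep_a1 b e ℓ bf)
        · rw [hav j hj.1 hj.2]
          exact SGAux.monomial_mem_vspan
            (SGAux.erep_gen b e ℓ bf (Finset.mem_Icc.mpr ⟨hj.1, hj.2⟩))
      · simp
      · intro y z _ _ h1 h2
        push_cast
        exact add_mem h1 h2
      · intro r y _ h1
        have hco : ((r • y : C) : Polynomial k) = (r : Polynomial k) * (y : Polynomial k) := by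
          push_cast [smul_eq_mul]
          ring
        rw [hco]
        simpa using SGAux.vspan_mul_vspan (hC1 r) h1
    -- elements of 𝔫^t lie in `vspan t 0`
    have hNpow : ∀ t : ℕ, ∀ x : C, x ∈ 𝔫^t →
        (x : Polynomial k) ∈ SGAux.vspan k b e ℓ bf t 0 := by
      intro t
      induction t with
      | zero => intro x _; simpa using hC1 x
      | succ s ih =>
        intro x hx
        rw [pow_succ] at hx
        refine Submodule.mul_induction_on hx ?_ ?_
        · intro i hi j hj
          have hco : ((i * j : C) : Polynomial k) = (i : Polynomial k) * (j : Polynomial k) := by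
            push_cast; ring
          rw [hco]
          simpa using SGAux.vspan_mul_vspan (ih i hi) (hN j hj)
        · intro u v h1 h2
          have hco : ((u + v : C) : Polynomial k) = (u : Polynomial k) + (v : Polynomial k) := by
            push_cast; ring
          rw [hco]
          exact add_mem h1 h2
    -- elements of q lie in `vspan 1 1`
    have hQ : ∀ x : C, x ∈ q → (x : Polynomial k) ∈ SGAux.vspan k b e ℓ bf 1 1 := by
      intro x hx
      rw [hq, Ideal.mem_span_singleton'] at hx
      obtain ⟨r, rfl⟩ := hx
      have hco : ((r * a : C) : Polynomial k) = (r : Polynomial k) * (a : Polynomial k) := by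
        push_cast; ring
      rw [hco, ha]
      simpa using SGAux.vspan_mul_vspan (hC1 r)
        (SGAux.monomial_mem_vspan (k := k) (SGAux.erep_e b e ℓ bf))
    -- a1^m lies in `vspan (1+n) 1`
    have hfinal : ((a1^m : C) : Polynomial k) ∈ SGAux.vspan k b e ℓ bf (1+n) 1 := by
      refine Submodule.mul_induction_on hmem ?_ ?_
      · intro i hi j hj
        have hco : ((i * j : C) : Polynomial k) = (i : Polynomial k) * (j : Polynomial k) := by
          push_cast; ring
        rw [hco]
        simpa using SGAux.vspan_mul_vspan (hQ i hi) (hNpow n j hj)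
      · intro u v h1 h2
        have hco : ((u + v : C) : Polynomial k) = (u : Polynomial k) + (v : Polynomial k) := by
          push_cast; ring
        rw [hco]
        exact add_mem h1 h2
    have hco : ((a1^m : C) : Polynomial k) = (X : Polynomial k)^((b*e+1)*m) := by
      push_cast
      rw [ha1, ← pow_mul]
    rw [hco] at hfinal
    have hrep : SGAux.erep b e ℓ bf (n+1) 1 ((b*e+1)*m) :=
      SGAux.erep_mono (SGAux.erep_of_monomial_mem_vspan hfinal) (by omega) (by omega)
    have := SGAux.key_arith hb hlow hfirst hstep hn hnm hm1 hm2 hrep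
    omega
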